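/- Let C be an o-symmetric convex disk in ℝ² and let x, y ∈ ℝ². Then [x,y]_C equals the segment [x,y] if and only if some translate of C contains the segment [x,y] in its boundary. -/

import Mathlib

open Set

noncomputable section

/-- The plane. -/
abbrev P2 := ℝ × ℝ

/-- The translate of `C` by the vector `x`. -/
def tr (C : Set P2) (x : P2) : Set P2 := (x + ·) '' C

/-- The `C`-spindle of `p` and `q`: the intersection of all translates of `C` containing both
`p` and `q` (equal to all of `ℝ²` if there is no such translate). -/
def spindle (C : Set P2) (p q : P2) : Set P2 :=
  ⋂ x ∈ {x : P2 | p ∈ tr C x ∧ q ∈ tr C x}, tr C x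

/-- `K` is `C`-(spindle) convex. -/
def CConvexSet (C K : Set P2) : Prop := ∀ p ∈ K, ∀ q ∈ K, spindle C p q ⊆ K

/-- `C` is an `o`-symmetric convex disk: compact, convex, with nonempty interior,
symmetric about the origin. -/
def SymDisk (C : Set P2) : Prop :=
  IsCompact C ∧ Convex ℝ C ∧ (interior C).Nonempty ∧ ∀ x ∈ C, -x ∈ C

/-- A convex body (convex disk) in the plane. -/
def ConvBody (K : Set P2) : Prop := IsCompact K ∧ Convex ℝ K ∧ (interior K).Nonempty

/-- Cross product (orientation determinant) of two plane vectors. -/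
def detv (a b : P2) : ℝ := a.1 * b.2 - a.2 * b.1

/-- A (cyclic) list of points is in (weak) counterclockwise convex position order. -/
def InConvexOrder {m : ℕ} (v : Fin m → P2) : Prop :=
  ∀ i j k : Fin m, i < j → j < k → 0 ≤ detv (v j - v i) (v k - v i)

/-- The `C`-perimeter of a set `K`: the supremum of the `C`-perimeters of convex polygons
inscribed in `K`, a polygon being given by a closed cyclic sequence of vertices in
counterclockwise convex position, with side lengths measured by the gauge (Minkowski
functional) of `C`. -/
def CPerim (C K : Set P2) : ℝ :=
  sSup {s | ∃ m : ℕ, ∃ v : Fin (m + 1) → P2, (∀ i, v i ∈ K) ∧ InConvexOrder v ∧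
    v (Fin.last m) = v 0 ∧ s = ∑ i : Fin m, gauge C (v i.succ - v i.castSucc)}

/-- The `C`-length of a curve `γ : [0,1] → ℝ²`: supremum of inscribed polygonal
`‖·‖_C`-lengths. -/
def CLength (C : Set P2) (γ : ℝ → P2) : ℝ :=
  sSup {s | ∃ n : ℕ, ∃ t : Fin (n + 1) → ℝ, Monotone t ∧ t 0 = 0 ∧ t (Fin.last n) = 1 ∧
    s = ∑ i : Fin n, gauge C (γ (t i.succ) - γ (t i.castSucc))}

/-- The set of `C`-lengths of arcs joining `x` and `y` contained in the boundary of some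
translate of `C`. -/
def arcSet (C : Set P2) (x y : P2) : Set ℝ :=
  {s | ∃ z : P2, ∃ γ : ℝ → P2, ContinuousOn γ (Icc 0 1) ∧ γ 0 = x ∧ γ 1 = y ∧
    γ '' Icc 0 1 ⊆ frontier (tr C z) ∧ s = CLength C γ}

/-- The `C`-arc-distance of `x` and `y`. -/
def arcDist (C : Set P2) (x y : P2) : ℝ := sInf (arcSet C x y)

/-- The `C`-convex hull of `X`: the intersection of all translates of `C` containing `X`. -/
def convC (C X : Set P2) : Set P2 := ⋂ x ∈ {x : P2 | X ⊆ tr C x}, tr C x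

/-- `Q` is a `C`-`n`-gon: an intersection of `n` translates of `C`. -/
def Cngon (C : Set P2) (n : ℕ) (Q : Set P2) : Prop :=
  ∃ x : Fin n → P2, Q = ⋂ i, tr C (x i)

/-- `K` is an intersection of translates of `C`. -/
def IsCIntersection (C K : Set P2) : Prop := ∃ T : Set P2, K = ⋂ x ∈ T, tr C x

/-- `â_n^C(K)`: the supremum of the areas of `C`-`n`-gons inscribed in `K`. -/
def ahat (C : Set P2) (n : ℕ) (K : Set P2) : ℝ :=
  sSup {s | ∃ Q : Set P2, Cngon C n Q ∧ Q ⊆ K ∧ s = (MeasureTheory.volume Q).toReal}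

/-- `Â_n^C(K)`: the infimum of the areas of `C`-`n`-gons circumscribed about `K`. -/
def Ahat (C : Set P2) (n : ℕ) (K : Set P2) : ℝ :=
  sInf {s | ∃ Q : Set P2, Cngon C n Q ∧ K ⊆ Q ∧ s = (MeasureTheory.volume Q).toReal}

/-- `p̂_n^C(K)`: the supremum of the `C`-perimeters of `C`-`n`-gons inscribed in `K`. -/
def phat (C : Set P2) (n : ℕ) (K : Set P2) : ℝ :=
  sSup {s | ∃ Q : Set P2, Cngon C n Q ∧ Q ⊆ K ∧ s = CPerim C Q}

/-- `P̂_n^C(K)`: the infimum of the `C`-perimeters of `C`-`n`-gons circumscribed about `K`. -/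
def Phat (C : Set P2) (n : ℕ) (K : Set P2) : ℝ :=
  sInf {s | ∃ Q : Set P2, Cngon C n Q ∧ K ⊆ Q ∧ s = CPerim C Q}

end
section helpers

open Metric Bornology

lemma mem_tr {C : Set P2} {z p : P2} : p ∈ tr C z ↔ p - z ∈ C := by
  constructor
  · rintro ⟨c, hc, rfl⟩; simpa using hc
  · intro h; exact ⟨p - z, h, by module⟩

lemma tr_eq_preimage (C : Set P2) (z : P2) : tr C z = (fun p => p - z) ⁻¹' C := by
  ext p; exact mem_tr

lemma frontier_tr (C : Set P2) (z : P2) :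
    frontier (tr C z) = (fun p => p - z) ⁻¹' frontier C := by
  rw [tr_eq_preimage, show (fun p : P2 => p - z) = ⇑(Homeomorph.subRight z) from rfl,
    ← Homeomorph.preimage_frontier]

lemma interior_tr (C : Set P2) (z : P2) :
    interior (tr C z) = (fun p => p - z) ⁻¹' interior C := by
  rw [tr_eq_preimage, show (fun p : P2 => p - z) = ⇑(Homeomorph.subRight z) from rfl,
    ← Homeomorph.preimage_interior]

lemma tr_closed {C : Set P2} (hc : IsClosed C) (z : P2) : IsClosed (tr C z) := by
  rw [tr_eq_preimage]; exact hc.preimage (by fun_prop)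

lemma tr_convex {C : Set P2} (hc : Convex ℝ C) (z : P2) : Convex ℝ (tr C z) :=
  hc.translate z

lemma mem_spindle {C : Set P2} {a b p : P2} :
    p ∈ spindle C a b ↔ ∀ z, a ∈ tr C z → b ∈ tr C z → p ∈ tr C z := by
  simp [spindle]

lemma segment_subset_spindle {C : Set P2} (hc : Convex ℝ C) (x y : P2) :
    segment ℝ x y ⊆ spindle C x y := by
  intro p hp
  rw [mem_spindle]
  intro z hxz hyz
  exact (tr_convex hc z).segment_subset hxz hyz hp

lemma support_functional {C : Set P2} (hcv : Convex ℝ C) (hint : (interior C).Nonempty)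
    {b : P2} (hb : b ∉ interior C) :
    ∃ f : P2 →L[ℝ] ℝ, (∀ c ∈ C, f c ≤ f b) ∧ ∀ c ∈ interior C, f c < f b := by
  obtain ⟨f, hf⟩ := geometric_hahn_banach_open_point hcv.interior isOpen_interior hb
  refine ⟨f, ?_, hf⟩
  intro c hc
  by_contra hlt
  push_neg at hlt
  obtain ⟨a₀, ha₀⟩ := hint
  have hab : f a₀ < f b := hf _ ha₀
  have hpos : 0 < f c - f a₀ := by linarith
  set t : ℝ := ((f b - f a₀) / (f c - f a₀) + 1) / 2 with ht
  have ht1' : (f b - f a₀) / (f c - f a₀) < 1 := (div_lt_one hpos).2 (by linarith)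
  have ht0' : 0 < (f b - f a₀) / (f c - f a₀) := div_pos (by linarith) hpos
  have htlt : (f b - f a₀) / (f c - f a₀) < t := by rw [ht]; linarith
  have ht1 : t < 1 := by rw [ht]; linarith
  have ht0 : 0 ≤ t := by rw [ht]; linarith
  have hmem : (1 - t) • a₀ + t • c ∈ interior C :=
    hcv.combo_interior_closure_mem_interior ha₀ (subset_closure hc) (by linarith) ht0 (by ring)
  have := hf _ hmem
  rw [map_add, map_smul, map_smul] at this
  have hkey : f b - f a₀ < t * (f c - f a₀) := by
    calc f b - f a₀ = ((f b - f a₀) / (f c - f a₀)) * (f c - f a₀) := by field_simp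
    _ < t * (f c - f a₀) := by exact mul_lt_mul_of_pos_right htlt hpos
  simp only [smul_eq_mul] at this
  nlinarith

lemma seg_frontier_of_mid {C : Set P2} (hC : SymDisk C) {x y z : P2}
    (hx : x ∈ tr C z) (hy : y ∈ tr C z) (hm : midpoint ℝ x y ∈ frontier (tr C z)) :
    segment ℝ x y ⊆ frontier (tr C z) := by
  obtain ⟨hcomp, hconv, hint, _⟩ := hC
  set m := midpoint ℝ x y with hmdef
  have hmfr : m - z ∈ frontier C := by rw [frontier_tr] at hm; exact hm
  have hfreq : frontier C = C \ interior C := hcomp.isClosed.frontier_eq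
  have hmni : m - z ∉ interior C := by rw [hfreq] at hmfr; exact hmfr.2
  obtain ⟨f, hle, hlt⟩ := support_functional hconv hint hmni
  have hxC : x - z ∈ C := mem_tr.1 hx
  have hyC : y - z ∈ C := mem_tr.1 hy
  have hsum : (x - z) + (y - z) = (m - z) + (m - z) := by
    have h2 : m + m = x + y := midpoint_add_self ℝ x y
    have : (m - z) + (m - z) = (m + m) - z - z := by abel
    rw [this, h2]; abel
  have hfsum : f (x - z) + f (y - z) = f (m - z) + f (m - z) := by
    rw [← map_add, ← map_add, hsum]
  have hfx : f (x - z) = f (m - z) := by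
    have := hle _ hxC; have := hle _ hyC; linarith
  have hfy : f (y - z) = f (m - z) := by
    have := hle _ hxC; have := hle _ hyC; linarith
  rintro p ⟨a, c, ha, hc, hac, rfl⟩
  have hz1 : a • z + c • z = z := by rw [← add_smul, hac, one_smul]
  have hpz : a • x + c • y - z = a • (x - z) + c • (y - z) := by
    linear_combination (norm := module) hac • z
  have hpC : a • x + c • y - z ∈ C := by
    rw [hpz]; exact hconv hxC hyC ha hc hac
  have hfp : f (a • x + c • y - z) = f (m - z) := by
    rw [hpz, map_add, map_smul, map_smul, smul_eq_mul, smul_eq_mul, hfx, hfy]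
    rw [← add_mul, hac, one_mul]
  have hpni : a • x + c • y - z ∉ interior C := by
    intro hin
    exact absurd hfp (ne_of_lt (hlt _ hin))
  rw [frontier_tr]
  show a • x + c • y - z ∈ frontier C
  rw [hfreq]; exact ⟨hpC, hpni⟩

lemma exists_mid_frontier {C : Set P2} (hC : SymDisk C) {x y : P2}
    (hsp : spindle C x y = segment ℝ x y) :
    ∃ z : P2, x ∈ tr C z ∧ y ∈ tr C z ∧ midpoint ℝ x y ∈ frontier (tr C z) := by
  obtain ⟨hcomp, hconv, hint, hsym⟩ := hC
  set m := midpoint ℝ x y with hmdef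
  set Z : Set P2 := {z | x ∈ tr C z ∧ y ∈ tr C z} with hZdef
  -- Z is nonempty
  have hZne : Z.Nonempty := by
    by_contra hne
    rw [not_nonempty_iff_eq_empty] at hne
    have huniv : spindle C x y = univ := by
      rw [spindle, ← hZdef, hne]
      simp
    rw [hsp] at huniv
    -- segment is bounded, univ is not
    set q : P2 := (‖x‖ + ‖y‖ + 1, 0) with hq
    have hqseg : q ∈ segment ℝ x y := by rw [huniv]; trivial
    obtain ⟨a, c, ha, hc, hac, hqe⟩ := hqseg
    have h1 : ‖q‖ ≤ a * ‖x‖ + c * ‖y‖ := by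
      rw [← hqe]
      calc ‖a • x + c • y‖ ≤ ‖a • x‖ + ‖c • y‖ := norm_add_le _ _
      _ = a * ‖x‖ + c * ‖y‖ := by
          rw [norm_smul, norm_smul, Real.norm_of_nonneg ha, Real.norm_of_nonneg hc]
    have h2 : ‖x‖ + ‖y‖ + 1 ≤ ‖q‖ := by
      have : |‖x‖ + ‖y‖ + 1| ≤ ‖q‖ := by
        rw [hq, Prod.norm_def]
        exact le_max_left _ _
      have h3 : (0:ℝ) ≤ ‖x‖ + ‖y‖ + 1 := by positivity
      rwa [abs_of_nonneg h3] at this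
    nlinarith [norm_nonneg x, norm_nonneg y, mul_le_mul_of_nonneg_left (le_refl ‖x‖) ha]
  by_contra hcon
  push_neg at hcon
  -- every translate in Z has m in its interior
  have hmem : ∀ z ∈ Z, m - z ∈ interior C := by
    rintro z ⟨hxz, hyz⟩
    have hmz : m ∈ tr C z := by
      have hm1 : m ∈ spindle C x y := by
        rw [hsp]; exact midpoint_mem_segment x y
      exact mem_spindle.1 hm1 z hxz hyz
    have hnf : m ∉ frontier (tr C z) := hcon z hxz hyz
    have : m ∈ interior (tr C z) := by
      rcases (tr_closed hcomp.isClosed z).frontier_eq ▸ hnf with h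
      by_contra hni
      exact h ⟨hmz, hni⟩
    rwa [interior_tr] at this
  -- Z is compact
  have hZeq : Z = ((fun w => x - w) ⁻¹' C) ∩ ((fun w => y - w) ⁻¹' C) := by
    ext w; simp [hZdef, mem_tr]
  have hZclosed : IsClosed Z := by
    rw [hZeq]
    exact (hcomp.isClosed.preimage (by fun_prop)).inter (hcomp.isClosed.preimage (by fun_prop))
  obtain ⟨M, hM⟩ := (isBounded_iff_subset_closedBall 0).1 hcomp.isBounded
  have hZbdd : IsBounded Z := by
    apply (isBounded_closedBall (x := x) (r := M)).subset
    rintro z ⟨hxz, hyz⟩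
    have : x - z ∈ C := mem_tr.1 hxz
    have h5 := hM this
    rw [mem_closedBall] at h5 ⊢
    rw [dist_eq_norm] at h5 ⊢
    simpa [norm_sub_rev] using h5
  have hZcomp : IsCompact Z := Metric.isCompact_iff_isClosed_bounded.2 ⟨hZclosed, hZbdd⟩
  -- open set
  have hU : Z ⊆ (fun w => m - w) ⁻¹' interior C := fun z hz => hmem z hz
  obtain ⟨δ, hδ0, hδ⟩ := hZcomp.exists_cthickening_subset_open
    (isOpen_interior.preimage (by fun_prop)) hU
  -- choose direction w
  set u : P2 := y - x with hu
  set w : P2 := if x = y then ((1:ℝ), (0:ℝ)) else (-u.2, u.1) with hw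
  have hwne : w ≠ 0 := by
    rw [hw]
    split_ifs with hxy
    · intro h; rw [Prod.ext_iff] at h; simp at h
    · intro h
      rw [Prod.ext_iff] at h
      simp only [Prod.fst_zero, Prod.snd_zero, neg_eq_zero] at h
      apply hxy
      have hu0 : u = 0 := by
        rw [Prod.ext_iff]
        exact ⟨by simpa using h.2, by simpa using h.1⟩
      rw [hu, sub_eq_zero] at hu0; exact hu0.symm
  have hwpos : 0 < ‖w‖ := norm_pos_iff.2 hwne
  set ε : ℝ := δ / ‖w‖ with hε
  have hε0 : 0 < ε := div_pos hδ0 hwpos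
  -- the perturbed point is in the spindle
  have hqsp : m + ε • w ∈ spindle C x y := by
    rw [mem_spindle]
    intro z hxz hyz
    have hzZ : z ∈ Z := ⟨hxz, hyz⟩
    have hcth : z - ε • w ∈ cthickening δ Z := by
      apply mem_cthickening_of_dist_le _ z δ Z hzZ
      rw [dist_eq_norm]
      have : z - ε • w - z = -(ε • w) := by abel
      rw [this, norm_neg, norm_smul, Real.norm_of_nonneg hε0.le, hε]
      rw [div_mul_cancel₀]
      exact hwpos.ne'
    have hin : m - (z - ε • w) ∈ interior C := hδ hcth
    have : m + ε • w - z ∈ C := by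
      have he : m + ε • w - z = m - (z - ε • w) := by abel
      rw [he]; exact interior_subset hin
    exact mem_tr.2 this
  rw [hsp] at hqsp
  -- but it is not in the segment
  by_cases hxy : x = y
  · subst hxy
    rw [segment_same] at hqsp
    have hmx : m = x := midpoint_self ℝ x
    rw [mem_singleton_iff, hmx] at hqsp
    have : ε • w = 0 := by
      linear_combination (norm := module) hqsp
    rcases smul_eq_zero.1 this with h | h
    · exact absurd h hε0.ne'
    · exact hwne h
  · -- x ≠ y
    obtain ⟨θ, ⟨hθ0, hθ1⟩, hθe⟩ := (segment_eq_image' ℝ x y ▸ hqsp : _)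
    have hθe' : x + θ • u = m + ε • w := by rw [hu]; exact hθe
    have hm2 : m + m = x + y := midpoint_add_self ℝ x y
    -- derive componentwise equations
    have hyxu : y = x + u := by rw [hu]; abel
    have hvec : (θ + θ - 1) • u = (ε + ε) • w := by
      have h2 : (x + θ • u) + (x + θ • u) = (m + ε • w) + (m + ε • w) := by rw [hθe']
      have h3 : (m + ε • w) + (m + ε • w) = (x + y) + ε • w + ε • w := by
        rw [← hm2]; abel
      rw [h3, hyxu] at h2
      have h4 : θ • u + θ • u - u = ε • w + ε • w := by
        have := h2
        apply add_left_cancel (a := x + x + u)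
        rw [show x + x + u + (θ • u + θ • u - u) = x + θ • u + (x + θ • u) from by abel, this]
        abel
      rw [sub_smul, add_smul, add_smul, one_smul]
      rw [← h4]
    have hwval : w = (-u.2, u.1) := by rw [hw, if_neg hxy]
    have he1 : (θ + θ - 1) * u.1 = (ε + ε) * (-u.2) := by
      have := congrArg Prod.fst hvec
      simpa [hwval] using this
    have he2 : (θ + θ - 1) * u.2 = (ε + ε) * u.1 := by
      have := congrArg Prod.snd hvec
      simpa [hwval] using this
    have hune : u ≠ 0 := by
      rw [hu, sub_ne_zero]; exact fun h => hxy h.symm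
    have husq : 0 < u.1 ^ 2 + u.2 ^ 2 := by
      rcases eq_or_ne u.1 0 with h1 | h1
      · have h2 : u.2 ≠ 0 := by
          intro h2
          exact hune (by rw [Prod.ext_iff]; simp [h1, h2])
        have := pow_pos (abs_pos.2 h2) 2
        rw [sq_abs u.2] at this
        nlinarith [sq_nonneg u.1]
      · have := pow_pos (abs_pos.2 h1) 2
        rw [sq_abs u.1] at this
        nlinarith [sq_nonneg u.2]
    have : ε * (u.1 ^ 2 + u.2 ^ 2) = 0 := by
      linear_combination (u.2 / 2) * he1 - (u.1 / 2) * he2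
    rcases mul_eq_zero.1 this with h | h
    · exact hε0.ne' h
    · exact husq.ne' h

lemma spindle_subset_segment {C : Set P2} (hC : SymDisk C) {x y z : P2}
    (hseg : segment ℝ x y ⊆ frontier (tr C z)) :
    spindle C x y ⊆ segment ℝ x y := by
  obtain ⟨hcomp, hconv, hint, hsym⟩ := hC
  have hclosed : IsClosed (tr C z) := tr_closed hcomp.isClosed z
  have hsub : frontier (tr C z) ⊆ tr C z := hclosed.frontier_subset
  have hx : x - z ∈ C := mem_tr.1 (hsub (hseg (left_mem_segment ℝ x y)))
  have hy : y - z ∈ C := mem_tr.1 (hsub (hseg (right_mem_segment ℝ x y)))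
  by_cases hxy : x = y
  · -- degenerate case
    subst hxy
    intro p hp
    rw [segment_same, mem_singleton_iff]
    by_contra hpx
    set d : P2 := p - x with hd
    have hd0 : d ≠ 0 := sub_ne_zero.2 hpx
    have hCne : C.Nonempty := hint.mono interior_subset
    set g : P2 → ℝ := fun v => d.1 * v.1 + d.2 * v.2 with hg
    have hgc : Continuous g := by rw [hg]; fun_prop
    obtain ⟨cs, hcs, hmax⟩ := hcomp.exists_isMaxOn hCne hgc.continuousOn
    have hxz : x ∈ tr C (x - cs) := mem_tr.2 (by simpa using hcs)
    have hptr : p ∈ tr C (x - cs) := mem_spindle.1 hp _ hxz hxz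
    have hdc : d + cs ∈ C := by
      have := mem_tr.1 hptr
      have he : p - (x - cs) = d + cs := by rw [hd]; abel
      rwa [he] at this
    have hle : g (d + cs) ≤ g cs := hmax hdc
    have hgd : g d ≤ 0 := by
      simp only [hg, Prod.fst_add, Prod.snd_add] at hle ⊢
      nlinarith
    have hdgt : 0 < g d := by
      simp only [hg]
      rcases eq_or_ne d.1 0 with h1 | h1
      · have h2 : d.2 ≠ 0 := by
          intro h2; exact hd0 (by rw [Prod.ext_iff]; simp [h1, h2])
        have := pow_pos (abs_pos.2 h2) 2
        rw [sq_abs] at this; nlinarith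
      · have := pow_pos (abs_pos.2 h1) 2
        rw [sq_abs] at this; nlinarith [sq_nonneg d.2]
    linarith
  · -- main case
    set m := midpoint ℝ x y with hmdef
    have hmfr : m - z ∈ frontier C := by
      rw [frontier_tr] at hseg
      exact hseg (midpoint_mem_segment x y)
    have hfreq : frontier C = C \ interior C := hcomp.isClosed.frontier_eq
    have hmni : m - z ∉ interior C := by rw [hfreq] at hmfr; exact hmfr.2
    obtain ⟨f, hle, hlt⟩ := support_functional hconv hint hmni
    set h : ℝ := f (m - z) with hh
    have hfsum : f (x - z) + f (y - z) = h + h := by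
      rw [← map_add, hh, ← map_add]
      congr 1
      have h2 : m + m = x + y := midpoint_add_self ℝ x y
      have : (m - z) + (m - z) = (m + m) - z - z := by abel
      rw [this, h2]; abel
    have hfx : f (x - z) = h := by
      have := hle _ hx; have := hle _ hy; rw [← hh] at *; linarith
    have hfy : f (y - z) = h := by
      have := hle _ hx; have := hle _ hy; rw [← hh] at *; linarith
    -- lower bound on f over C by symmetry
    have hlow : ∀ c ∈ C, -h ≤ f c := by
      intro c hc
      have := hle _ (hsym c hc)
      rw [map_neg] at this
      linarith
    set u : P2 := y - x with hu
    have hune : u ≠ 0 := by rw [hu, sub_ne_zero]; exact fun h' => hxy h'.symm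
    have hfu : f u = 0 := by
      have : u = (y - z) - (x - z) := by rw [hu]; abel
      rw [this, map_sub, hfx, hfy, sub_self]
    -- the set S
    set S : Set ℝ := (fun r => (x - z) + r • u) ⁻¹' C with hS
    have hS0 : (0:ℝ) ∈ S := by simp [hS, hx]
    have hS1 : (1:ℝ) ∈ S := by
      have : (x - z) + (1:ℝ) • u = y - z := by rw [one_smul, hu]; abel
      simp only [hS, mem_preimage, this]; exact hy
    have hSclosed : IsClosed S := hcomp.isClosed.preimage (by fun_prop)
    obtain ⟨M, hM⟩ := (isBounded_iff_subset_closedBall 0).1 hcomp.isBounded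
    have hunorm : 0 < ‖u‖ := norm_pos_iff.2 hune
    have hSbdd : ∀ r ∈ S, |r| ≤ (M + ‖x - z‖) / ‖u‖ := by
      intro r hr
      have h1 : ‖(x - z) + r • u‖ ≤ M := by
        have := hM hr
        rwa [mem_closedBall, dist_zero_right] at this
      have h2 : ‖r • u‖ ≤ M + ‖x - z‖ := by
        calc ‖r • u‖ = ‖((x - z) + r • u) - (x - z)‖ := by congr 1; abel
        _ ≤ ‖(x - z) + r • u‖ + ‖x - z‖ := norm_sub_le _ _
        _ ≤ M + ‖x - z‖ := by linarith
      rw [norm_smul, Real.norm_eq_abs] at h2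
      rw [le_div_iff₀ hunorm]
      linarith
    have hbddA : BddAbove S := ⟨(M + ‖x - z‖) / ‖u‖, fun r hr => (abs_le.1 (hSbdd r hr)).2⟩
    have hbddB : BddBelow S := ⟨-((M + ‖x - z‖) / ‖u‖), fun r hr => (abs_le.1 (hSbdd r hr)).1⟩
    have hSne : S.Nonempty := ⟨0, hS0⟩
    set rp : ℝ := sSup S with hrp
    set rm : ℝ := sInf S with hrm
    have hrpS : rp ∈ S := hSclosed.csSup_mem hSne hbddA
    have hrmS : rm ∈ S := hSclosed.csInf_mem hSne hbddB
    have hrm0 : rm ≤ 0 := csInf_le hbddB hS0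
    have hrp1 : 1 ≤ rp := le_csSup hbddA hS1
    -- S contains the interval [rm, rp]
    have hIcc : ∀ r, rm ≤ r → r ≤ rp → r ∈ S := by
      intro r h1 h2
      rcases eq_or_lt_of_le (h1.trans h2) with he | hlt'
      · have : r = rm := le_antisymm (he ▸ h2) h1
        rwa [this]
      · set a : ℝ := (rp - r) / (rp - rm) with ha'
        set b : ℝ := (r - rm) / (rp - rm) with hb'
        have hd : 0 < rp - rm := by linarith
        have ha : 0 ≤ a := div_nonneg (by linarith) hd.le
        have hb : 0 ≤ b := div_nonneg (by linarith) hd.le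
        have hab : a + b = 1 := by rw [ha', hb']; field_simp; ring
        have harb : a * rm + b * rp = r := by rw [ha', hb']; field_simp; ring
        have hcomb := hconv hrmS hrpS ha hb hab
        have heq : a • ((x - z) + rm • u) + b • ((x - z) + rp • u) = (x - z) + r • u := by
          calc a • ((x - z) + rm • u) + b • ((x - z) + rp • u)
              = (a + b) • (x - z) + (a * rm + b * rp) • u := by
                simp only [smul_add, smul_smul, add_smul]; abel
            _ = (x - z) + r • u := by rw [hab, harb, one_smul]
        simp only [hS, mem_preimage] at hcomb ⊢
        rwa [heq] at hcomb
    -- now take p in the spindle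
    intro p hp
    have hp' := mem_spindle.1 hp
    -- translate z itself
    have hxz : x ∈ tr C z := mem_tr.2 hx
    have hyz : y ∈ tr C z := mem_tr.2 hy
    have hpz : f (p - z) ≤ h := hle _ (mem_tr.1 (hp' z hxz hyz))
    -- opposite translate
    set z2 : P2 := x + y - z with hz2
    have hxz2 : x ∈ tr C z2 := by
      apply mem_tr.2
      have : x - z2 = -(y - z) := by rw [hz2]; abel
      rw [this]; exact hsym _ hy
    have hyz2 : y ∈ tr C z2 := by
      apply mem_tr.2
      have : y - z2 = -(x - z) := by rw [hz2]; abel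
      rw [this]; exact hsym _ hx
    have hpz2 : -h ≤ f (p - z2) := hlow _ (mem_tr.1 (hp' z2 hxz2 hyz2))
    have hdecomp : f (p - z2) = f (p - z) - f (x - z) - f (y - z) := by
      rw [← map_sub, ← map_sub]
      congr 1
      rw [hz2]; abel
    have hfpz : f (p - z) = h := by
      rw [hdecomp, hfx, hfy] at hpz2; linarith
    have hfpx : f (p - x) = 0 := by
      have : p - x = (p - z) - (x - z) := by abel
      rw [this, map_sub, hfpz, hfx, sub_self]
    -- p - x is parallel to u
    set w' : P2 := p - x with hw'
    set α : ℝ := f (1, 0) with hα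
    set β : ℝ := f (0, 1) with hβ
    have hfval : ∀ v : P2, f v = α * v.1 + β * v.2 := by
      intro v
      have hv : v = v.1 • ((1:ℝ), (0:ℝ)) + v.2 • ((0:ℝ), (1:ℝ)) := by
        rw [Prod.ext_iff]; simp
      calc f v = f (v.1 • ((1:ℝ), (0:ℝ)) + v.2 • ((0:ℝ), (1:ℝ))) := by rw [← hv]
      _ = v.1 * α + v.2 * β := by
          rw [map_add, map_smul, map_smul, smul_eq_mul, smul_eq_mul, ← hα, ← hβ]
      _ = α * v.1 + β * v.2 := by ring
    have hαβ : α ≠ 0 ∨ β ≠ 0 := by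
      by_contra hcc
      push_neg at hcc
      obtain ⟨a₀, ha₀⟩ := hint
      have h1 : f a₀ < f (m - z) := hlt _ ha₀
      rw [hfval a₀, hfval (m - z), hcc.1, hcc.2] at h1
      simp at h1
    have hueq : α * u.1 + β * u.2 = 0 := by rw [← hfval]; exact hfu
    have hweq : α * w'.1 + β * w'.2 = 0 := by rw [← hfval]; exact hfpx
    have hdet : u.1 * w'.2 - u.2 * w'.1 = 0 := by
      rcases hαβ with hα0 | hβ0
      · have : α * (u.1 * w'.2 - u.2 * w'.1) = 0 := by
          linear_combination w'.2 * hueq - u.2 * hweq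
        rcases mul_eq_zero.1 this with h' | h'
        · exact absurd h' hα0
        · exact h'
      · have : β * (u.1 * w'.2 - u.2 * w'.1) = 0 := by
          linear_combination u.1 * hweq - w'.1 * hueq
        rcases mul_eq_zero.1 this with h' | h'
        · exact absurd h' hβ0
        · exact h'
    have hucomp : u.1 ≠ 0 ∨ u.2 ≠ 0 := by
      by_contra hcc
      push_neg at hcc
      exact hune (by rw [Prod.ext_iff]; simp [hcc.1, hcc.2])
    obtain ⟨t, hwt⟩ : ∃ t : ℝ, w' = t • u := by
      rcases hucomp with h1 | h2
      · refine ⟨w'.1 / u.1, ?_⟩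
        rw [Prod.ext_iff]
        constructor
        · simp only [Prod.smul_fst, smul_eq_mul]; field_simp
        · simp only [Prod.smul_snd, smul_eq_mul]; field_simp
          linear_combination hdet
      · refine ⟨w'.2 / u.2, ?_⟩
        rw [Prod.ext_iff]
        constructor
        · simp only [Prod.smul_fst, smul_eq_mul]; field_simp
          linear_combination -hdet
        · simp only [Prod.smul_snd, smul_eq_mul]; field_simp
    have hpxt : p = x + t • u := by
      have : p = x + w' := by rw [hw']; abel
      rw [this, hwt]
    -- translate z - rm • u gives t ≥ 0
    have hxm : x ∈ tr C (z - rm • u) := by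
      apply mem_tr.2
      have : x - (z - rm • u) = (x - z) + rm • u := by abel
      rw [this]; exact hrmS
    have hym : y ∈ tr C (z - rm • u) := by
      apply mem_tr.2
      have : y - (z - rm • u) = (x - z) + (1 + rm) • u := by
        rw [add_smul, one_smul, hu]; abel
      rw [this]; exact hIcc _ (by linarith) (by linarith)
    have ht0 : 0 ≤ t := by
      have hmem := mem_tr.1 (hp' _ hxm hym)
      have he : p - (z - rm • u) = (x - z) + (t + rm) • u := by
        rw [hpxt, add_smul]; abel
      rw [he] at hmem
      have : t + rm ∈ S := hmem
      have := csInf_le hbddB this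
      rw [← hrm] at this; linarith
    -- translate z + (1 - rp) • u gives t ≤ 1
    have hxp : x ∈ tr C (z + (1 - rp) • u) := by
      apply mem_tr.2
      have : x - (z + (1 - rp) • u) = (x - z) + (rp - 1) • u := by
        rw [sub_smul, sub_smul, one_smul]; abel
      rw [this]; exact hIcc _ (by linarith) (by linarith)
    have hyp : y ∈ tr C (z + (1 - rp) • u) := by
      apply mem_tr.2
      have : y - (z + (1 - rp) • u) = (x - z) + rp • u := by
        rw [sub_smul, one_smul, hu]; abel
      rw [this]; exact hrpS
    have ht1 : t ≤ 1 := by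
      have hmem := mem_tr.1 (hp' _ hxp hyp)
      have he : p - (z + (1 - rp) • u) = (x - z) + (t - 1 + rp) • u := by
        rw [hpxt, add_smul, sub_smul, sub_smul, one_smul]; abel
      rw [he] at hmem
      have : t - 1 + rp ∈ S := hmem
      have := le_csSup hbddA this
      rw [← hrp] at this; linarith
    rw [segment_eq_image']
    exact ⟨t, ⟨ht0, ht1⟩, by show x + t • (y - x) = p; rw [← hu, hpxt]⟩

end helpers

theorem stmt10 (C : Set P2) (hC : SymDisk C) (x y : P2) :
    spindle C x y = segment ℝ x y ↔ ∃ z : P2, segment ℝ x y ⊆ frontier (tr C z) := by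
  constructor
  · intro hsp
    obtain ⟨z, hxz, hyz, hm⟩ := exists_mid_frontier hC hsp
    exact ⟨z, seg_frontier_of_mid hC hxz hyz hm⟩
  · rintro ⟨z, hseg⟩
    exact Set.Subset.antisymm (spindle_subset_segment hC hseg)
      (segment_subset_spindle hC.2.1 x y)
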